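/- Let X, Y, Z : ℝ → ℝ be C² functions and suppose that (Y(v) − Z(w))X'(u) + (X(u) − Z(w))Y'(v) − (X(u) + Y(v))Z'(w) = 0 for all (u,v,w) with u+v+w = 0. Then for all such (u,v,w) the following three equations also hold: (Y−Z)X'' − (X−Z)Y'' − (X'−Y')Z' = 0; (Y'+Z')X' + (X−Z)Y'' + (X+Y)Z'' = 0; (Y−Z)X'' + (X'+Z')Y' + (X+Y)Z'' = 0 (all functions of u, v, w respectively, evaluated at u, v, w = −u−v). -/

import Mathlib

/-- If `X, Y, Z` are `C²` and `(Y−Z)X' + (X−Z)Y' − (X+Y)Z' = 0` on the plane `u+v+w=0`,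
then the three differentiated identities `B₁ = B₂ = B₃ = 0` also hold on that plane. -/
theorem stmt_3 (X Y Z : ℝ → ℝ)
    (hX : ContDiff ℝ 2 X) (hY : ContDiff ℝ 2 Y) (hZ : ContDiff ℝ 2 Z)
    (hA : ∀ u v w : ℝ, u + v + w = 0 →
      (Y v - Z w) * deriv X u + (X u - Z w) * deriv Y v - (X u + Y v) * deriv Z w = 0) :
    ∀ u v w : ℝ, u + v + w = 0 →
      ((Y v - Z w) * deriv (deriv X) u - (X u - Z w) * deriv (deriv Y) v
          - (deriv X u - deriv Y v) * deriv Z w = 0) ∧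
      ((deriv Y v + deriv Z w) * deriv X u + (X u - Z w) * deriv (deriv Y) v
          + (X u + Y v) * deriv (deriv Z) w = 0) ∧
      ((Y v - Z w) * deriv (deriv X) u + (deriv X u + deriv Z w) * deriv Y v
          + (X u + Y v) * deriv (deriv Z) w = 0) := by
  have hX2 : ContDiff ℝ ((1:ℕ)+1) X := by exact_mod_cast hX
  have hY2 : ContDiff ℝ ((1:ℕ)+1) Y := by exact_mod_cast hY
  have hZ2 : ContDiff ℝ ((1:ℕ)+1) Z := by exact_mod_cast hZ
  have hXd : Differentiable ℝ X := (contDiff_succ_iff_deriv.mp hX2).1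
  have hYd : Differentiable ℝ Y := (contDiff_succ_iff_deriv.mp hY2).1
  have hZd : Differentiable ℝ Z := (contDiff_succ_iff_deriv.mp hZ2).1
  have hXd' : Differentiable ℝ (deriv X) :=
    (contDiff_succ_iff_deriv.mp hX2).2.2.differentiable (by simp)
  have hYd' : Differentiable ℝ (deriv Y) :=
    (contDiff_succ_iff_deriv.mp hY2).2.2.differentiable (by simp)
  have hZd' : Differentiable ℝ (deriv Z) :=
    (contDiff_succ_iff_deriv.mp hZ2).2.2.differentiable (by simp)
  intro u v w huvw
  have hw : w = -u - v := by linarith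
  subst hw
  -- B₃ : differentiate in u
  have hB3 : (Y v - Z (-u - v)) * deriv (deriv X) u
      + (deriv X u + deriv Z (-u - v)) * deriv Y v
      + (X u + Y v) * deriv (deriv Z) (-u - v) = 0 := by
    have key : ∀ t : ℝ, HasDerivAt
        (fun t => (Y v - Z (-t - v)) * deriv X t + (X t - Z (-t - v)) * deriv Y v
          - (X t + Y v) * deriv Z (-t - v))
        ((Y v - Z (-t - v)) * deriv (deriv X) t + deriv Z (-t - v) * deriv X t
          + (deriv X t + deriv Z (-t - v)) * deriv Y v
          - (deriv X t * deriv Z (-t - v) - (X t + Y v) * deriv (deriv Z) (-t - v))) t := by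
      intro t
      have hin : HasDerivAt (fun t : ℝ => -t - v) (-1) t :=
        ((hasDerivAt_id t).neg.sub_const v)
      have hZc : HasDerivAt (fun t : ℝ => Z (-t - v)) (deriv Z (-t - v) * (-1)) t :=
        (hZd (-t - v)).hasDerivAt.comp t hin
      have hZc' : HasDerivAt (fun t : ℝ => deriv Z (-t - v))
          (deriv (deriv Z) (-t - v) * (-1)) t :=
        by have := (hZd' (-t - v)).hasDerivAt.comp t hin; exact this
      have h1 : HasDerivAt (fun t : ℝ => (Y v - Z (-t - v)) * deriv X t)
          ((0 - deriv Z (-t - v) * (-1)) * deriv X t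
            + (Y v - Z (-t - v)) * deriv (deriv X) t) t :=
        ((hasDerivAt_const t (Y v)).sub hZc).mul (hXd' t).hasDerivAt
      have h2 : HasDerivAt (fun t : ℝ => (X t - Z (-t - v)) * deriv Y v)
          ((deriv X t - deriv Z (-t - v) * (-1)) * deriv Y v) t :=
        (((hXd t).hasDerivAt.sub hZc)).mul_const (deriv Y v)
      have h3 : HasDerivAt (fun t : ℝ => (X t + Y v) * deriv Z (-t - v))
          (deriv X t * deriv Z (-t - v)
            + (X t + Y v) * (deriv (deriv Z) (-t - v) * (-1))) t :=
        (((hXd t).hasDerivAt.add_const (Y v))).mul hZc'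
      have := (h1.add h2).sub h3
      exact this.congr_deriv (by ring)
    have hzero : (fun t => (Y v - Z (-t - v)) * deriv X t + (X t - Z (-t - v)) * deriv Y v
        - (X t + Y v) * deriv Z (-t - v)) = fun _ : ℝ => (0:ℝ) := by
      funext t
      exact hA t v (-t - v) (by ring)
    have h0 : HasDerivAt (fun t => (Y v - Z (-t - v)) * deriv X t
        + (X t - Z (-t - v)) * deriv Y v - (X t + Y v) * deriv Z (-t - v)) (0:ℝ) u := by
      rw [hzero]; exact hasDerivAt_const u 0
    have := h0.unique (key u)
    linarith [this]
  -- B₂ : differentiate in v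
  have hB2 : (deriv Y v + deriv Z (-u - v)) * deriv X u
      + (X u - Z (-u - v)) * deriv (deriv Y) v
      + (X u + Y v) * deriv (deriv Z) (-u - v) = 0 := by
    have key : ∀ t : ℝ, HasDerivAt
        (fun t => (Y t - Z (-u - t)) * deriv X u + (X u - Z (-u - t)) * deriv Y t
          - (X u + Y t) * deriv Z (-u - t))
        ((deriv Y t + deriv Z (-u - t)) * deriv X u
          + deriv Z (-u - t) * deriv Y t + (X u - Z (-u - t)) * deriv (deriv Y) t
          - (deriv Y t * deriv Z (-u - t) - (X u + Y t) * deriv (deriv Z) (-u - t))) t := by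
      intro t
      have hin : HasDerivAt (fun t : ℝ => -u - t) (-1) t := by
        simpa using (hasDerivAt_id t).const_sub (-u)
      have hZc : HasDerivAt (fun t : ℝ => Z (-u - t)) (deriv Z (-u - t) * (-1)) t :=
        (hZd (-u - t)).hasDerivAt.comp t hin
      have hZc' : HasDerivAt (fun t : ℝ => deriv Z (-u - t))
          (deriv (deriv Z) (-u - t) * (-1)) t :=
        (hZd' (-u - t)).hasDerivAt.comp t hin
      have h1 : HasDerivAt (fun t : ℝ => (Y t - Z (-u - t)) * deriv X u)
          ((deriv Y t - deriv Z (-u - t) * (-1)) * deriv X u) t :=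
        ((hYd t).hasDerivAt.sub hZc).mul_const (deriv X u)
      have h2 : HasDerivAt (fun t : ℝ => (X u - Z (-u - t)) * deriv Y t)
          ((0 - deriv Z (-u - t) * (-1)) * deriv Y t
            + (X u - Z (-u - t)) * deriv (deriv Y) t) t :=
        ((hasDerivAt_const t (X u)).sub hZc).mul (hYd' t).hasDerivAt
      have h3 : HasDerivAt (fun t : ℝ => (X u + Y t) * deriv Z (-u - t))
          (deriv Y t * deriv Z (-u - t)
            + (X u + Y t) * (deriv (deriv Z) (-u - t) * (-1))) t := by
        have := (((hasDerivAt_const t (X u)).add (hYd t).hasDerivAt)).mul hZc'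
        exact this.congr_deriv (by simp only [Pi.add_apply]; ring)
      have := (h1.add h2).sub h3
      exact this.congr_deriv (by ring)
    have hzero : (fun t => (Y t - Z (-u - t)) * deriv X u + (X u - Z (-u - t)) * deriv Y t
        - (X u + Y t) * deriv Z (-u - t)) = fun _ : ℝ => (0:ℝ) := by
      funext t
      exact hA u t (-u - t) (by ring)
    have h0 : HasDerivAt (fun t => (Y t - Z (-u - t)) * deriv X u
        + (X u - Z (-u - t)) * deriv Y t - (X u + Y t) * deriv Z (-u - t)) (0:ℝ) v := by
      rw [hzero]; exact hasDerivAt_const v 0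
    have := h0.unique (key v)
    linarith [this]
  refine ⟨by linarith, hB2, hB3⟩
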